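/- Consider an urn model with K colors satisfying Assumptions 1 and 2. Let (X_n) be a sequence of random variables adapted to (F_n) such that |X_n| ≤ c′·‖R_n‖ for some constant c′ ∈ (0,∞). Then, with probability 1, (1/n) Σ_{k=1}^n ( X_k − E[X_k 1{‖R_k‖ ≤ k} | F_{k−1}] ) → 0. -/

import Mathlib

open MeasureTheory Filter
open scoped Topology ENNReal

noncomputable section

/-- Max row-sum norm `‖A‖ = max_i Σ_j |A i j|` of a `K × K` matrix. -/
def matNorm {K : ℕ} (A : Fin K → Fin K → ℝ) : ℝ := ⨆ i, ∑ j, |A i j|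

lemma urnAux_sum_eq (a : ℕ → ℝ) : ∀ n : ℕ,
    ∑ k ∈ Finset.Icc 1 n, a k
      = n * (∑ k ∈ Finset.Icc 1 n, a k / k)
        - ∑ j ∈ Finset.range n, (∑ k ∈ Finset.Icc 1 j, a k / k) := by
  intro n
  induction n with
  | zero => simp
  | succ n ih =>
    have h1 : (1:ℕ) ≤ n + 1 := by omega
    rw [Finset.sum_Icc_succ_top h1, Finset.sum_Icc_succ_top h1, Finset.sum_range_succ, ih]
    have hne : ((n:ℝ) + 1) ≠ 0 := by positivity
    push_cast
    field_simp
    ring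

lemma urnAux_kronecker {a : ℕ → ℝ} {l : ℝ}
    (h : Tendsto (fun n : ℕ => ∑ k ∈ Finset.Icc 1 n, a k / k) atTop (𝓝 l)) :
    Tendsto (fun n : ℕ => (n:ℝ)⁻¹ * ∑ k ∈ Finset.Icc 1 n, a k) atTop (𝓝 0) := by
  have hces := h.cesaro
  have h2 : Tendsto (fun n : ℕ => (∑ k ∈ Finset.Icc 1 n, a k / k)
      - (n:ℝ)⁻¹ * ∑ j ∈ Finset.range n, (∑ k ∈ Finset.Icc 1 j, a k / k))
      atTop (𝓝 0) := by
    have := h.sub hces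
    simpa using this
  apply h2.congr'
  filter_upwards [eventually_ge_atTop 1] with n hn
  have hne : (n:ℝ) ≠ 0 := by positivity
  rw [urnAux_sum_eq a n, mul_sub, ← mul_assoc, inv_mul_cancel₀ hne, one_mul]

lemma urnAux_cesaro_zero {c : ℕ → ℝ} (h : ∀ᶠ k in atTop, c k = 0) :
    Tendsto (fun n : ℕ => (n:ℝ)⁻¹ * ∑ k ∈ Finset.Icc (1:ℕ) n, c k) atTop (𝓝 0) := by
  obtain ⟨N, hN⟩ := eventually_atTop.1 h
  have hev : ∀ᶠ n : ℕ in atTop, (n:ℝ)⁻¹ * ∑ k ∈ Finset.Icc (1:ℕ) n, c k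
      = (n:ℝ)⁻¹ * ∑ k ∈ Finset.Icc (1:ℕ) N, c k := by
    filter_upwards [eventually_ge_atTop N] with n hn
    congr 1
    refine (Finset.sum_subset (Finset.Icc_subset_Icc_right hn) ?_).symm
    intro k hk hk'
    simp only [Finset.mem_Icc] at hk hk'
    exact hN k (by omega)
  have hlim : Tendsto (fun n : ℕ => (n:ℝ)⁻¹ * ∑ k ∈ Finset.Icc (1:ℕ) N, c k) atTop (𝓝 0) := by
    have h1 : Tendsto (fun n : ℕ => (n:ℝ)⁻¹) atTop (𝓝 0) :=
      tendsto_inv_atTop_nhds_zero_nat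
    simpa using h1.mul_const (∑ k ∈ Finset.Icc 1 N, c k)
  exact hlim.congr' (hev.mono fun n hn => hn.symm)

lemma urnAux_matNorm_nonneg {K : ℕ} (A : Fin K → Fin K → ℝ) : 0 ≤ matNorm A :=
  Real.iSup_nonneg fun _ => Finset.sum_nonneg fun _ _ => abs_nonneg _

lemma urnAux_matNorm_meas {Ω : Type} {m : MeasurableSpace Ω} {K : ℕ}
    {f : Ω → Fin K → Fin K → ℝ} (hf : Measurable f) :
    Measurable fun ω => matNorm (f ω) := by
  rcases Nat.eq_zero_or_pos K with hK | hK
  · subst hK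
    have : ∀ ω, matNorm (f ω) = 0 := by
      intro ω
      simp [matNorm, Real.iSup_of_isEmpty]
    simp only [this]
    exact measurable_const
  · haveI : Nonempty (Fin K) := Fin.pos_iff_nonempty.1 hK
    have hm : ∀ i, Measurable fun ω => ∑ j, |f ω i j| := by
      intro i
      apply Finset.measurable_sum
      intro j _
      exact ((measurable_pi_apply j).comp ((measurable_pi_apply i).comp hf)).abs
    have heq : (fun ω => matNorm (f ω))
        = Finset.univ.sup' Finset.univ_nonempty (fun i ω => ∑ j, |f ω i j|) := by
      funext ω
      rw [matNorm, ← Finset.sup'_univ_eq_ciSup, Finset.sup'_apply]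
    rw [heq]
    exact Finset.measurable_sup' _ fun i _ => hm i

lemma urnAux_count (x : ℝ) :
    (∑' k : ℕ, if (k:ℝ) < x then (1:ℝ≥0∞) else 0) ≤ ENNReal.ofReal x + 1 := by
  rcases le_or_gt x 0 with hx | hx
  · have : ∀ k : ℕ, (if (k:ℝ) < x then (1:ℝ≥0∞) else 0) = 0 := by
      intro k
      rw [if_neg]
      exact not_lt.2 (le_trans hx (by positivity))
    simp [this]
  · have hx0 : (0:ℝ) ≤ x := hx.le
    have hsum : (∑' k : ℕ, if (k:ℝ) < x then (1:ℝ≥0∞) else 0)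
        = ∑ k ∈ Finset.range ⌈x⌉₊, (if (k:ℝ) < x then (1:ℝ≥0∞) else 0) := by
      apply tsum_eq_sum
      intro k hk
      rw [if_neg]
      push_neg
      have : (⌈x⌉₊ : ℝ) ≤ k := by
        exact_mod_cast Nat.le_of_not_lt fun h => hk (Finset.mem_range.2 h)
      exact le_trans (Nat.le_ceil x) this
    rw [hsum]
    calc (∑ k ∈ Finset.range ⌈x⌉₊, (if (k:ℝ) < x then (1:ℝ≥0∞) else 0))
        ≤ ∑ _k ∈ Finset.range ⌈x⌉₊, (1:ℝ≥0∞) := by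
          apply Finset.sum_le_sum
          intro k _
          split <;> simp
      _ = (⌈x⌉₊ : ℝ≥0∞) := by simp
      _ ≤ ENNReal.ofReal x + 1 := by
          have h1 : (⌈x⌉₊ : ℝ) < x + 1 := Nat.ceil_lt_add_one hx0
          calc (⌈x⌉₊ : ℝ≥0∞) = ENNReal.ofReal (⌈x⌉₊ : ℝ) := by
                simp [ENNReal.ofReal_natCast]
            _ ≤ ENNReal.ofReal (x + 1) := ENNReal.ofReal_le_ofReal h1.le
            _ = ENNReal.ofReal x + 1 := by
                rw [ENNReal.ofReal_add hx0 zero_le_one, ENNReal.ofReal_one]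

lemma urnAux_tsum_tail {Ω : Type} {m : MeasurableSpace Ω} {μ : Measure Ω}
    [IsProbabilityMeasure μ] {g : Ω → ℝ} (hg : Measurable g) :
    (∑' k : ℕ, μ {ω | (k:ℝ) < g ω}) ≤ (∫⁻ ω, ENNReal.ofReal (g ω) ∂μ) + 1 := by
  have hmeas : ∀ k : ℕ, MeasurableSet {ω | (k:ℝ) < g ω} := fun k =>
    measurableSet_lt measurable_const hg
  have h1 : ∀ k : ℕ, μ {ω | (k:ℝ) < g ω}
      = ∫⁻ ω, (if (k:ℝ) < g ω then (1:ℝ≥0∞) else 0) ∂μ := by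
    intro k
    rw [← lintegral_indicator_one (hmeas k)]
    refine lintegral_congr fun ω => ?_
    by_cases h : (k:ℝ) < g ω <;> simp [Set.indicator, h]
  calc (∑' k : ℕ, μ {ω | (k:ℝ) < g ω})
      = ∑' k : ℕ, ∫⁻ ω, (if (k:ℝ) < g ω then (1:ℝ≥0∞) else 0) ∂μ := by
        exact tsum_congr h1
    _ = ∫⁻ ω, ∑' k : ℕ, (if (k:ℝ) < g ω then (1:ℝ≥0∞) else 0) ∂μ := by
        rw [← lintegral_tsum]
        intro k
        exact (Measurable.ite (hmeas k) measurable_const measurable_const).aemeasurable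
    _ ≤ ∫⁻ ω, (ENNReal.ofReal (g ω) + 1) ∂μ := by
        exact lintegral_mono fun ω => urnAux_count (g ω)
    _ = (∫⁻ ω, ENNReal.ofReal (g ω) ∂μ) + 1 := by
        rw [lintegral_add_right _ measurable_const]
        simp

lemma urnAux_int_of_bdd {Ω : Type} {m : MeasurableSpace Ω} {μ : Measure Ω}
    [IsFiniteMeasure μ] {f : Ω → ℝ} {C : ℝ}
    (hf : AEStronglyMeasurable f μ) (hb : ∀ᵐ ω ∂μ, |f ω| ≤ C) : Integrable f μ :=
  ⟨hf, HasFiniteIntegral.of_bounded (C := C) (by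
    filter_upwards [hb] with ω hω
    simpa [Real.norm_eq_abs] using hω)⟩
lemma urnAux_layercake_sq {Ω : Type} {m : MeasurableSpace Ω} (μ : Measure Ω)
    {f : Ω → ℝ} (hf : Measurable f) (hnn : ∀ ω, 0 ≤ f ω) :
    ∫⁻ ω, ENNReal.ofReal ((f ω)^2) ∂μ
      = ∫⁻ t in Set.Ioi (0:ℝ), μ {ω | t < f ω} * ENNReal.ofReal (2*t) := by
  have h := lintegral_comp_eq_lintegral_meas_lt_mul μ (f := f) (g := fun t => 2*t)
    (Filter.Eventually.of_forall hnn) hf.aemeasurable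
    (fun t _ => (continuous_const.mul continuous_id).intervalIntegrable 0 t)
    ((ae_restrict_mem measurableSet_Ioi).mono fun t ht => by
      simp only [Set.mem_Ioi] at ht; positivity)
  rw [← h]
  refine lintegral_congr fun ω => ?_
  congr 1
  rw [intervalIntegral.integral_const_mul, integral_id]
  ring

lemma urnAux_invsq_tail {t : ℝ} (ht : 0 < t) (n : ℕ) :
    ∑ k ∈ (Finset.Icc (1:ℕ) n).filter (fun k : ℕ => t < (k:ℝ)), ((k:ℝ)⁻¹)^2 ≤ 2 / t := by
  have hsub : (Finset.Icc (1:ℕ) n).filter (fun k : ℕ => t < (k:ℝ))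
      ⊆ Finset.Ioo ⌊t⌋₊ (n+1) := by
    intro k hk
    simp only [Finset.mem_filter, Finset.mem_Icc, Finset.mem_Ioo] at *
    exact ⟨(Nat.floor_lt ht.le).2 hk.2, by omega⟩
  calc ∑ k ∈ (Finset.Icc (1:ℕ) n).filter (fun k : ℕ => t < (k:ℝ)), ((k:ℝ)⁻¹)^2
      ≤ ∑ k ∈ Finset.Ioo ⌊t⌋₊ (n+1), ((k:ℝ)⁻¹)^2 :=
        Finset.sum_le_sum_of_subset_of_nonneg hsub (fun k _ _ => by positivity)
    _ = ∑ k ∈ Finset.Ioo ⌊t⌋₊ (n+1), (((k:ℝ))^2)⁻¹ := by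
        refine Finset.sum_congr rfl fun k _ => ?_
        rw [inv_pow]
    _ ≤ 2 / ((⌊t⌋₊:ℝ) + 1) := sum_Ioo_inv_sq_le _ _
    _ ≤ 2 / t := by
        apply div_le_div_of_nonneg_left (by norm_num) ht
        exact (Nat.lt_floor_add_one t).le
/-- Irreducibility of a nonnegative square matrix. -/
def MatIrreducible {K : ℕ} (A : Fin K → Fin K → ℝ) : Prop :=
  ∀ i j, ∃ N : ℕ, 1 ≤ N ∧ 0 < (Matrix.of A ^ N) i j
set_option maxHeartbeats 1000000

/-- **Proposition.**  In an urn model satisfying Assumptions 1 and 2, if `(X_n)` is adapted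
to `(F_n)` with `|X_n| ≤ c′·‖R_n‖`, then almost surely
`(1/n) Σ_{k=1}^n (X_k − E[X_k 1{‖R_k‖ ≤ k} | F_{k−1}]) → 0`. -/
theorem urn_truncated_centering_cesaro
    {Ω : Type} {m0 : MeasurableSpace Ω} {μ : Measure Ω} [IsProbabilityMeasure μ]
    {K : ℕ} (hK : 0 < K)
    (F : Filtration ℕ m0)
    (C : ℕ → Ω → Fin K → ℝ) (R : ℕ → Ω → Fin K → Fin K → ℝ) (χ : ℕ → Ω → Fin K)
    (S : ℕ → Ω → ℝ) (hS : ∀ n ω, S n ω = ∑ i, C n ω i)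
    (N : ℕ → Ω → Fin K → ℝ)
    (hN : ∀ n ω i, N n ω i = ∑ m ∈ Finset.Icc 1 n, (if χ m ω = i then (1:ℝ) else 0))
    -- evolution of the composition vector and nonnegativity of replacements
    (hEvol : ∀ n, 1 ≤ n → ∀ ω j, C n ω j = C (n-1) ω j + R n ω (χ n ω) j)
    (hRnonneg : ∀ n, 1 ≤ n → ∀ ω i j, 0 ≤ R n ω i j)
    -- adaptedness to the filtration `F_n = σ(C_0, (R_m, χ_m)_{m ≤ n})`
    (hC0meas : Measurable[F 0] (C 0))
    (hχmeas : ∀ n, Measurable[F n] (χ n))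
    (hRmeas : ∀ n, Measurable[F n] (R n))
    (hRint : ∀ n, 1 ≤ n → ∀ i j, Integrable (fun ω => R n ω i j) μ)
    -- Assumption 1
    (hC0nonneg : ∀ ω i, 0 ≤ C 0 ω i)
    (hC0ne : ∀ ω, C 0 ω ≠ 0)
    (hC0int : ∀ i, Integrable (fun ω => C 0 ω i) μ)
    (hCond : ∀ n, 1 ≤ n → ∀ i,
      μ[fun ω => (if χ n ω = i then (1:ℝ) else 0) | F (n-1)]
        =ᵐ[μ] fun ω => C (n-1) ω i / S (n-1) ω)
    (hCondIndep : ∀ n, 1 ≤ n → ∀ (i : Fin K) (B : Set (Fin K → Fin K → ℝ)),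
      MeasurableSet B →
      μ[fun ω => (if χ n ω = i then (1:ℝ) else 0) * Set.indicator B 1 (R n ω) | F (n-1)]
        =ᵐ[μ] fun ω =>
          (μ[fun ω' => (if χ n ω' = i then (1:ℝ) else 0) | F (n-1)]) ω *
          (μ[fun ω' => Set.indicator B 1 (R n ω') | F (n-1)]) ω)
    -- Assumption 2 : (a) majorization, or (b) a uniform `L φ(L)` moment bound
    (hA2 :
      (∃ c : ℝ, 0 < c ∧ ∃ Rmaj : Ω → ℝ, Measurable Rmaj ∧ (∀ ω, 0 < Rmaj ω) ∧
        Integrable Rmaj μ ∧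
        ∀ n, 1 ≤ n → ∀ x : ℝ, 0 < x →
          μ {ω | x < matNorm (R n ω)} ≤ ENNReal.ofReal c * μ {ω | x < Rmaj ω}) ∨
      (∃ φ : ℝ → ℝ, (∀ x, 0 ≤ x → 0 ≤ φ x) ∧
        (∃ x₀ : ℝ, ∀ x, x₀ ≤ x → 0 < φ x) ∧
        (∃ x₀ : ℝ, ∀ x y, x₀ ≤ x → x ≤ y → φ x ≤ φ y) ∧
        (Summable fun n : ℕ => 1 / (n * φ n)) ∧
        (∃ x₀ : ℝ, ∀ x y, x₀ ≤ x → x ≤ y → x / φ x ≤ y / φ y) ∧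
        (∃ M : ℝ≥0∞, M < ⊤ ∧ ∀ n, 1 ≤ n →
          ∫⁻ ω, ENNReal.ofReal (matNorm (R n ω) * φ (matNorm (R n ω))) ∂μ ≤ M)))
    -- the dominated adapted sequence `(X_n)`
    (X : ℕ → Ω → ℝ) (hXmeas : ∀ n, Measurable[F n] (X n))
    (c' : ℝ) (hc' : 0 < c')
    (hXdom : ∀ n, 1 ≤ n → ∀ ω, |X n ω| ≤ c' * matNorm (R n ω)) :
    ∀ᵐ ω ∂μ, Tendsto (fun n : ℕ =>
        (n : ℝ)⁻¹ * ∑ k ∈ Finset.Icc 1 n,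
          (X k ω - (μ[fun ω' => X k ω' *
            (if matNorm (R k ω') ≤ (k : ℝ) then 1 else 0) | F (k-1)]) ω))
      atTop (𝓝 0) := by
  classical
  -- abbreviations
  set L : ℕ → Ω → ℝ := fun k ω => matNorm (R k ω) with hLdef
  set Y : ℕ → Ω → ℝ := fun k ω' => X k ω' * (if matNorm (R k ω') ≤ (k:ℝ) then 1 else 0)
    with hYdef
  set Z : ℕ → Ω → ℝ := fun k => μ[Y k | F (k-1)] with hZdef
  set D : ℕ → Ω → ℝ := fun k => Y k - Z k with hDdef
  set Mf : ℕ → Ω → ℝ := fun n ω => ∑ k ∈ Finset.Icc (1:ℕ) n, D k ω / (k:ℝ) with hMfdef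
  set T : ℕ → Ω → ℝ := fun k ω => if L k ω ≤ (k:ℝ) then L k ω else 0 with hTdef
  set β : ℕ → ℝ≥0∞ := fun k => ∫⁻ ω, ENNReal.ofReal ((T k ω)^2) ∂μ with hβdef
  -- basic measurability and bounds
  have hLmeasF : ∀ k, Measurable[F k] (L k) := fun k => urnAux_matNorm_meas (hRmeas k)
  have hLmeas : ∀ k, Measurable (L k) := fun k => (hLmeasF k).mono (F.le k) le_rfl
  have hLnn : ∀ k ω, 0 ≤ L k ω := fun k ω => urnAux_matNorm_nonneg _
  have hTmeas : ∀ k, Measurable (T k) := by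
    intro k
    exact Measurable.ite (measurableSet_le (hLmeas k) measurable_const) (hLmeas k)
      measurable_const
  have hTnn : ∀ k ω, 0 ≤ T k ω := by
    intro k ω
    simp only [hTdef]
    split
    · exact hLnn k ω
    · exact le_refl 0
  have hTle : ∀ k ω, T k ω ≤ (k:ℝ) := by
    intro k ω
    simp only [hTdef]
    split
    · assumption
    · exact Nat.cast_nonneg k
  have hYabs : ∀ k, 1 ≤ k → ∀ ω, |Y k ω| ≤ c' * T k ω := by
    intro k hk ω
    simp only [hYdef, hTdef, hLdef]
    by_cases h : matNorm (R k ω) ≤ (k:ℝ)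
    · rw [if_pos h, if_pos h, mul_one]
      exact hXdom k hk ω
    · rw [if_neg h, if_neg h, mul_zero, abs_zero, mul_zero]
  have hYbdd : ∀ k, 1 ≤ k → ∀ ω, |Y k ω| ≤ c' * k := fun k hk ω =>
    le_trans (hYabs k hk ω) (mul_le_mul_of_nonneg_left (hTle k ω) hc'.le)
  have hYmeasF : ∀ k, Measurable[F k] (Y k) := by
    intro k
    exact (hXmeas k).mul (Measurable.ite (measurableSet_le (hLmeasF k) measurable_const)
      measurable_const measurable_const)
  have hYsm : ∀ k, StronglyMeasurable[F k] (Y k) := fun k => (hYmeasF k).stronglyMeasurable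
  have hYint : ∀ k, 1 ≤ k → Integrable (Y k) μ := by
    intro k hk
    exact urnAux_int_of_bdd ((hYmeasF k).mono (F.le k) le_rfl).aestronglyMeasurable
      (Filter.Eventually.of_forall (hYbdd k hk))
  have hZsm : ∀ k, StronglyMeasurable[F (k-1)] (Z k) := fun k => stronglyMeasurable_condExp
  have hZint : ∀ k, Integrable (Z k) μ := fun k => integrable_condExp
  have hZbdd : ∀ k, 1 ≤ k → ∀ᵐ ω ∂μ, |Z k ω| ≤ c' * k := by
    intro k hk
    have hnn : (0:ℝ) ≤ c' * k := by positivity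
    have h := ae_bdd_condExp_of_ae_bdd (m := F (k-1)) (μ := μ) (R := (c' * k).toNNReal)
      (f := Y k) ?_
    · filter_upwards [h] with ω hω
      rwa [Real.coe_toNNReal _ hnn] at hω
    · filter_upwards with ω
      rw [Real.coe_toNNReal _ hnn]
      exact hYbdd k hk ω
  have hDint : ∀ k, 1 ≤ k → Integrable (D k) μ := fun k hk => (hYint k hk).sub (hZint k)
  have hDsmF : ∀ k, StronglyMeasurable[F k] (D k) := by
    intro k
    exact (hYsm k).sub ((hZsm k).mono (F.mono (Nat.sub_le k 1)))
  have hDbdd : ∀ k, 1 ≤ k → ∀ᵐ ω ∂μ, |D k ω| ≤ 2 * (c' * k) := by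
    intro k hk
    filter_upwards [hZbdd k hk] with ω hω
    have h1 := hYbdd k hk ω
    have : D k ω = Y k ω - Z k ω := rfl
    rw [this]
    calc |Y k ω - Z k ω| ≤ |Y k ω| + |Z k ω| := abs_sub _ _
      _ ≤ 2 * (c' * k) := by linarith
  -- integrable products of a.e. bounded functions
  have hint_mul : ∀ (f g : Ω → ℝ) (cf cg : ℝ), AEStronglyMeasurable f μ →
      AEStronglyMeasurable g μ → 0 ≤ cf → (∀ᵐ ω ∂μ, |f ω| ≤ cf) →
      (∀ᵐ ω ∂μ, |g ω| ≤ cg) → Integrable (fun ω => f ω * g ω) μ := by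
    intro f g cf cg hf hg hcf hbf hbg
    refine urnAux_int_of_bdd (hf.mul hg) (C := cf * cg) ?_
    filter_upwards [hbf, hbg] with ω h1 h2
    rw [abs_mul]
    exact mul_le_mul h1 h2 (abs_nonneg _) hcf
  -- martingale structure
  have hMsmF : ∀ n, StronglyMeasurable[F n] (Mf n) := by
    intro n
    apply Measurable.stronglyMeasurable
    apply Finset.measurable_sum
    intro k hk
    have hk' : k ≤ n := (Finset.mem_Icc.1 hk).2
    exact (((hDsmF k).measurable.mono (F.mono hk') le_rfl).div_const _)
  have hMint : ∀ n, Integrable (Mf n) μ := by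
    intro n
    apply integrable_finset_sum
    intro k hk
    exact ((hDint k (Finset.mem_Icc.1 hk).1).div_const _)
  have hMbdd : ∀ n, ∀ᵐ ω ∂μ, |Mf n ω| ≤ ∑ k ∈ Finset.Icc (1:ℕ) n, 2 * (c' * k) := by
    intro n
    have hall : ∀ᵐ ω ∂μ, ∀ k ∈ Finset.Icc (1:ℕ) n, |D k ω| ≤ 2 * (c' * k) := by
      rw [Filter.eventually_all_finset]
      intro k hk
      exact hDbdd k (Finset.mem_Icc.1 hk).1
    filter_upwards [hall] with ω hω
    simp only [hMfdef]
    calc |∑ k ∈ Finset.Icc (1:ℕ) n, D k ω / (k:ℝ)|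
        ≤ ∑ k ∈ Finset.Icc (1:ℕ) n, |D k ω / (k:ℝ)| := Finset.abs_sum_le_sum_abs _ _
      _ ≤ ∑ k ∈ Finset.Icc (1:ℕ) n, 2 * (c' * k) := by
          apply Finset.sum_le_sum
          intro k hk
          have hk1 : (1:ℝ) ≤ (k:ℝ) := by exact_mod_cast (Finset.mem_Icc.1 hk).1
          rw [abs_div, abs_of_nonneg (by positivity : (0:ℝ) ≤ (k:ℝ))]
          exact le_trans (div_le_self (abs_nonneg _) hk1) (hω k hk)
  have hDcond : ∀ k, μ[D (k+1) | F k] =ᵐ[μ] 0 := by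
    intro k
    have hk1 : 1 ≤ k + 1 := by omega
    have hsub : μ[D (k+1) | F k] =ᵐ[μ] μ[Y (k+1)|F k] - μ[Z (k+1)|F k] := by
      have hD : D (k+1) = Y (k+1) - Z (k+1) := rfl
      rw [hD]
      exact condExp_sub (hYint (k+1) hk1) (hZint (k+1)) _
    have hZZ : μ[Z (k+1)|F k] = Z (k+1) :=
      condExp_of_stronglyMeasurable (F.le k) (hZsm (k+1)) (hZint (k+1))
    have hYZ : μ[Y (k+1)|F k] = Z (k+1) := rfl
    filter_upwards [hsub] with ω h1
    rw [Pi.zero_apply, h1, Pi.sub_apply, hYZ, hZZ, sub_self]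
  have hmart : Martingale Mf F μ := by
    refine martingale_nat (fun n => hMsmF n) hMint ?_
    intro i
    have hrec : Mf (i+1) = Mf i + (((i+1:ℕ)):ℝ)⁻¹ • D (i+1) := by
      funext ω
      simp only [hMfdef, Pi.add_apply, Pi.smul_apply, smul_eq_mul]
      rw [Finset.sum_Icc_succ_top (by omega : (1:ℕ) ≤ i+1)]
      ring
    have h1 : μ[Mf (i+1)|F i] =ᵐ[μ] μ[Mf i|F i] + μ[(((i+1:ℕ)):ℝ)⁻¹ • D (i+1)|F i] := by
      rw [hrec]
      exact condExp_add (hMint i) ((hDint (i+1) (by omega)).smul _) _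
    have h2 : μ[Mf i|F i] = Mf i :=
      condExp_of_stronglyMeasurable (F.le i) (hMsmF i) (hMint i)
    have h3 : μ[(((i+1:ℕ)):ℝ)⁻¹ • D (i+1)|F i] =ᵐ[μ] (((i+1:ℕ)):ℝ)⁻¹ • μ[D (i+1)|F i] :=
      condExp_smul _ _ _
    filter_upwards [h1, h3, hDcond i] with ω e1 e3 e4
    rw [e1, Pi.add_apply, h2, e3, Pi.smul_apply, e4, Pi.zero_apply, smul_zero, add_zero]
  -- variance computation
  have hD2int : ∀ k, 1 ≤ k → Integrable (fun ω => D k ω * D k ω) μ := by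
    intro k hk
    exact hint_mul _ _ _ _ (hDint k hk).1 (hDint k hk).1 (by positivity)
      (hDbdd k hk) (hDbdd k hk)
  have hcross : ∀ n, ∫ ω, Mf n ω * D (n+1) ω ∂μ = 0 := by
    intro n
    have hDb := hDbdd (n+1) (by omega)
    have hMb := hMbdd n
    have hint1 : Integrable (Mf n * D (n+1)) μ := by
      refine hint_mul _ _ _ _ ((hMsmF n).mono (F.le n)).aestronglyMeasurable
        ((hDsmF (n+1)).mono (F.le (n+1))).aestronglyMeasurable ?_ hMb hDb
      exact Finset.sum_nonneg fun k _ => by positivity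
    have h3 : (μ[Mf n * D (n+1)|F n]) =ᵐ[μ] 0 := by
      refine (condExp_mul_of_stronglyMeasurable_left (hMsmF n) hint1
        (hDint (n+1) (by omega))).trans ?_
      filter_upwards [hDcond n] with ω h
      rw [Pi.mul_apply, h, Pi.zero_apply, mul_zero]
    have h1 : ∫ ω, (Mf n * D (n+1)) ω ∂μ = ∫ ω, (μ[Mf n * D (n+1)|F n]) ω ∂μ :=
      (integral_condExp (F.le n)).symm
    calc ∫ ω, Mf n ω * D (n+1) ω ∂μ = ∫ ω, (Mf n * D (n+1)) ω ∂μ := rfl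
      _ = ∫ ω, (μ[Mf n * D (n+1)|F n]) ω ∂μ := h1
      _ = ∫ ω, (0:Ω → ℝ) ω ∂μ := integral_congr_ae h3
      _ = 0 := by simp
  have hZY : ∀ k, 1 ≤ k → ∫ ω, Z k ω * Y k ω ∂μ = ∫ ω, Z k ω * Z k ω ∂μ := by
    intro k hk
    have hintZY : Integrable (Z k * Y k) μ := by
      refine hint_mul _ _ _ _ (hZint k).1
        ((hYmeasF k).mono (F.le k) le_rfl).aestronglyMeasurable ?_ (hZbdd k hk)
        (Filter.Eventually.of_forall (hYbdd k hk))
      positivity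
    have h2 := condExp_mul_of_stronglyMeasurable_left (hZsm k) hintZY (hYint k hk)
    calc ∫ ω, Z k ω * Y k ω ∂μ = ∫ ω, (Z k * Y k) ω ∂μ := rfl
      _ = ∫ ω, (μ[Z k * Y k|F (k-1)]) ω ∂μ := (integral_condExp (F.le (k-1))).symm
      _ = ∫ ω, (Z k * μ[Y k|F (k-1)]) ω ∂μ := integral_congr_ae h2
      _ = ∫ ω, Z k ω * Z k ω ∂μ := rfl
  have hY2int : ∀ k, 1 ≤ k → Integrable (fun ω => Y k ω * Y k ω) μ := by
    intro k hk
    exact hint_mul _ _ _ _ (hYint k hk).1 (hYint k hk).1 (by positivity)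
      (Filter.Eventually.of_forall (hYbdd k hk)) (Filter.Eventually.of_forall (hYbdd k hk))
  have hD2le : ∀ k, 1 ≤ k → ∫ ω, D k ω * D k ω ∂μ ≤ ∫ ω, Y k ω * Y k ω ∂μ := by
    intro k hk
    have hYZint : Integrable (fun ω => Z k ω * Y k ω) μ := by
      refine hint_mul _ _ _ _ (hZint k).1
        ((hYmeasF k).mono (F.le k) le_rfl).aestronglyMeasurable ?_ (hZbdd k hk)
        (Filter.Eventually.of_forall (hYbdd k hk))
      positivity
    have hZ2int : Integrable (fun ω => Z k ω * Z k ω) μ := by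
      refine hint_mul _ _ _ _ (hZint k).1 (hZint k).1 ?_ (hZbdd k hk) (hZbdd k hk)
      positivity
    have hexp : ∀ ω, D k ω * D k ω
        = Y k ω * Y k ω - 2*(Z k ω * Y k ω) + Z k ω * Z k ω := by
      intro ω
      have hD : D k ω = Y k ω - Z k ω := rfl
      rw [hD]; ring
    have heq : ∫ ω, D k ω * D k ω ∂μ
        = ∫ ω, Y k ω * Y k ω ∂μ - 2*∫ ω, Z k ω * Y k ω ∂μ + ∫ ω, Z k ω * Z k ω ∂μ := by
      have hsubint : Integrable (fun ω => Y k ω * Y k ω - 2*(Z k ω * Y k ω)) μ :=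
        (hY2int k hk).sub (hYZint.const_mul 2)
      have hmulint : Integrable (fun ω => 2*(Z k ω * Y k ω)) μ := hYZint.const_mul 2
      simp only [hexp]
      rw [integral_add hsubint hZ2int, integral_sub (hY2int k hk) hmulint,
        integral_const_mul]
    rw [heq, hZY k hk]
    have h0 : 0 ≤ ∫ ω, Z k ω * Z k ω ∂μ := integral_nonneg fun ω => mul_self_nonneg _
    linarith
  have hMsq : ∀ n, ∫ ω, Mf n ω * Mf n ω ∂μ
      = ∑ k ∈ Finset.Icc (1:ℕ) n, ((k:ℝ)⁻¹)^2 * ∫ ω, D k ω * D k ω ∂μ := by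
    intro n
    induction n with
    | zero => simp [hMfdef]
    | succ n ih =>
      have hc0 : (((n+1:ℕ)):ℝ) ≠ 0 := Nat.cast_ne_zero.mpr (by omega)
      have hrec : ∀ ω, Mf (n+1) ω = Mf n ω + D (n+1) ω / (((n+1:ℕ)):ℝ) := by
        intro ω
        simp only [hMfdef]
        rw [Finset.sum_Icc_succ_top (by omega : (1:ℕ) ≤ n+1)]
      have hDb := hDbdd (n+1) (by omega)
      have hMb := hMbdd n
      have hMD : Integrable (fun ω => Mf n ω * D (n+1) ω) μ := by
        refine hint_mul _ _ _ _ ((hMsmF n).mono (F.le n)).aestronglyMeasurable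
          ((hDsmF (n+1)).mono (F.le (n+1))).aestronglyMeasurable ?_ hMb hDb
        exact Finset.sum_nonneg fun k _ => by positivity
      have hM2 : Integrable (fun ω => Mf n ω * Mf n ω) μ := by
        refine hint_mul _ _ _ _ ((hMsmF n).mono (F.le n)).aestronglyMeasurable
          ((hMsmF n).mono (F.le n)).aestronglyMeasurable ?_ hMb hMb
        exact Finset.sum_nonneg fun k _ => by positivity
      have hD2 : Integrable (fun ω => D (n+1) ω * D (n+1) ω) μ := hD2int (n+1) (by omega)
      have hexp : ∀ ω, Mf (n+1) ω * Mf (n+1) ω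
          = (Mf n ω * Mf n ω + (2/(((n+1:ℕ)):ℝ)) * (Mf n ω * D (n+1) ω))
            + (((((n+1:ℕ)):ℝ)⁻¹)^2 * (D (n+1) ω * D (n+1) ω)) := by
        intro ω
        rw [hrec ω]
        field_simp
        ring
      have hint_a : Integrable (fun ω => 2/(((n+1:ℕ)):ℝ) * (Mf n ω * D (n+1) ω)) μ :=
        hMD.const_mul _
      have hint_b : Integrable
          (fun ω => Mf n ω * Mf n ω + 2/(((n+1:ℕ)):ℝ) * (Mf n ω * D (n+1) ω)) μ :=
        hM2.add hint_a
      have hint_c : Integrable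
          (fun ω => ((((n+1:ℕ)):ℝ)⁻¹)^2 * (D (n+1) ω * D (n+1) ω)) μ := hD2.const_mul _
      rw [Finset.sum_Icc_succ_top (by omega : (1:ℕ) ≤ n+1), ← ih]
      simp only [hexp]
      rw [integral_add hint_b hint_c, integral_add hM2 hint_a, integral_const_mul,
        integral_const_mul, hcross n, mul_zero, add_zero]
  -- the master bound and Borel-Cantelli, by cases on Assumption 2
  have hβfin : ∀ k, 1 ≤ k → β k ≤ ENNReal.ofReal ((k:ℝ)^2) := by
    intro k _
    calc β k = ∫⁻ ω, ENNReal.ofReal ((T k ω)^2) ∂μ := rfl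
      _ ≤ ∫⁻ _ω, ENNReal.ofReal ((k:ℝ)^2) ∂μ := lintegral_mono fun ω =>
          ENNReal.ofReal_le_ofReal (by
            have h1 := hTle k ω
            have h2 := hTnn k ω
            nlinarith [mul_self_le_mul_self h2 h1])
      _ = ENNReal.ofReal ((k:ℝ)^2) := by rw [lintegral_const, measure_univ, mul_one]
  have hβlayer : ∀ k, β k = ∫⁻ t in Set.Ioi (0:ℝ), μ {ω | t < T k ω} * ENNReal.ofReal (2*t) :=
    fun k => urnAux_layercake_sq μ (hTmeas k) (hTnn k)
  have htailmeas : ∀ k : ℕ, Measurable fun t : ℝ => μ {ω | t < T k ω} := by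
    intro k
    have hmono : Antitone fun t : ℝ => μ {ω | t < T k ω} := by
      intro s t hst
      exact measure_mono fun ω hω => lt_of_le_of_lt hst hω
    exact hmono.measurable
  obtain ⟨A, hAne, hAle, hBC⟩ : ∃ A : ℝ≥0∞, A ≠ ⊤ ∧
      (∀ n, ∑ k ∈ Finset.Icc (1:ℕ) n, ENNReal.ofReal (((k:ℝ)⁻¹)^2) * β k ≤ A) ∧
      (∀ᵐ ω ∂μ, ∀ᶠ k in atTop, L k ω ≤ (k:ℝ)) := by
    have hBCgen : (∑' k:ℕ, μ {ω | (k:ℝ) < L k ω}) ≠ ⊤ →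
        ∀ᵐ ω ∂μ, ∀ᶠ k in atTop, L k ω ≤ (k:ℝ) := by
      intro h
      filter_upwards [MeasureTheory.ae_eventually_notMem h] with ω hω
      filter_upwards [hω] with k hk
      exact not_lt.1 hk
    rcases hA2 with ⟨c, hc, Rmaj, hRmeasb, hRpos, hRint2, htail⟩ |
      ⟨φ, hφ0, ⟨xp, hxp⟩, ⟨xm, hxm⟩, hsum, ⟨xr, hxr⟩, ⟨Mb, hMbtop, hMbd⟩⟩
    · -- Assumption 2(a)
      have hRof : ∫⁻ ω, ENNReal.ofReal (Rmaj ω) ∂μ ≠ ⊤ := by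
        have h1 : ∫⁻ ω, ENNReal.ofReal (Rmaj ω) ∂μ ≤ ∫⁻ ω, (‖Rmaj ω‖₊ : ℝ≥0∞) ∂μ :=
          lintegral_mono fun ω => Real.ofReal_le_enorm _
        exact (lt_of_le_of_lt h1 hRint2.2).ne
      have hterm : ∀ k:ℕ, μ {ω | (k:ℝ) < L k ω}
          ≤ (if k = 0 then (1:ℝ≥0∞) else 0) + ENNReal.ofReal c * μ {ω | (k:ℝ) < Rmaj ω} := by
        intro k
        rcases Nat.eq_zero_or_pos k with rfl | hk
        · rw [if_pos rfl]
          exact le_trans prob_le_one le_self_add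
        · rw [if_neg (by omega), zero_add]
          exact htail k hk (k:ℝ) (by exact_mod_cast hk)
      have hBCa : (∑' k:ℕ, μ {ω | (k:ℝ) < L k ω}) ≠ ⊤ := by
        refine ne_top_of_le_ne_top ?_ (ENNReal.tsum_le_tsum hterm)
        rw [ENNReal.tsum_add, ENNReal.tsum_mul_left]
        refine ENNReal.add_ne_top.2 ⟨?_, ENNReal.mul_ne_top ENNReal.ofReal_ne_top ?_⟩
        · rw [tsum_eq_single 0 (fun b hb => if_neg hb)]
          simp
        · refine ne_top_of_le_ne_top ?_ (urnAux_tsum_tail hRmeasb)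
          exact ENNReal.add_ne_top.2 ⟨hRof, ENNReal.one_ne_top⟩
      refine ⟨ENNReal.ofReal (4*c) * ∫⁻ ω, ENNReal.ofReal (Rmaj ω) ∂μ,
        ENNReal.mul_ne_top ENNReal.ofReal_ne_top hRof, ?_, hBCgen hBCa⟩
      intro n
      have hmeas_t : ∀ k : ℕ, Measurable fun t : ℝ => μ {ω | t < T k ω} * ENNReal.ofReal (2*t) :=
        fun k => (htailmeas k).mul (measurable_const.mul measurable_id).ennreal_ofReal
      have hRtail_meas : Measurable fun t : ℝ => μ {ω | t < Rmaj ω} := by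
        have hmono : Antitone fun t : ℝ => μ {ω | t < Rmaj ω} := fun s t hst =>
          measure_mono fun ω hω => lt_of_le_of_lt hst hω
        exact hmono.measurable
      calc ∑ k ∈ Finset.Icc (1:ℕ) n, ENNReal.ofReal (((k:ℝ)⁻¹)^2) * β k
          = ∑ k ∈ Finset.Icc (1:ℕ) n, ∫⁻ t in Set.Ioi (0:ℝ),
              ENNReal.ofReal (((k:ℝ)⁻¹)^2) * (μ {ω | t < T k ω} * ENNReal.ofReal (2*t)) := by
            refine Finset.sum_congr rfl fun k hk => ?_
            rw [hβlayer k, ← lintegral_const_mul _ (hmeas_t k)]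
        _ = ∫⁻ t in Set.Ioi (0:ℝ), ∑ k ∈ Finset.Icc (1:ℕ) n,
              ENNReal.ofReal (((k:ℝ)⁻¹)^2) * (μ {ω | t < T k ω} * ENNReal.ofReal (2*t)) := by
            rw [← lintegral_finset_sum]
            intro k _
            exact measurable_const.mul (hmeas_t k)
        _ ≤ ∫⁻ t in Set.Ioi (0:ℝ), ENNReal.ofReal (4*c) * μ {ω | t < Rmaj ω} := by
            apply lintegral_mono_ae
            filter_upwards [ae_restrict_mem measurableSet_Ioi] with t ht
            have ht0 : (0:ℝ) < t := ht
            have htne : t ≠ 0 := ht0.ne'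
            calc ∑ k ∈ Finset.Icc (1:ℕ) n,
                  ENNReal.ofReal (((k:ℝ)⁻¹)^2) * (μ {ω | t < T k ω} * ENNReal.ofReal (2*t))
                ≤ ∑ k ∈ Finset.Icc (1:ℕ) n,
                  (if t < (k:ℝ) then ENNReal.ofReal (((k:ℝ)⁻¹)^2) else 0)
                    * (ENNReal.ofReal c * μ {ω | t < Rmaj ω} * ENNReal.ofReal (2*t)) := by
                  apply Finset.sum_le_sum
                  intro k hk
                  have hk1 := (Finset.mem_Icc.1 hk).1
                  by_cases hlt : t < (k:ℝ)
                  · rw [if_pos hlt]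
                    have hμt : μ {ω | t < T k ω} ≤ ENNReal.ofReal c * μ {ω | t < Rmaj ω} := by
                      refine le_trans (measure_mono ?_) (htail k hk1 t ht0)
                      intro ω hω
                      simp only [Set.mem_setOf_eq] at hω ⊢
                      by_cases hL : L k ω ≤ (k:ℝ)
                      · have hTL : T k ω = L k ω := by
                          simp only [hTdef]
                          rw [if_pos hL]
                        rwa [hTL] at hω
                      · have hT0 : T k ω = 0 := by
                          simp only [hTdef]
                          rw [if_neg hL]
                        rw [hT0] at hω
                        linarith
                    calc ENNReal.ofReal (((k:ℝ)⁻¹)^2) * (μ {ω | t < T k ω} * ENNReal.ofReal (2*t))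
                        ≤ ENNReal.ofReal (((k:ℝ)⁻¹)^2)
                            * ((ENNReal.ofReal c * μ {ω | t < Rmaj ω}) * ENNReal.ofReal (2*t)) :=
                          mul_le_mul_right (mul_le_mul_left hμt _) _
                      _ = ENNReal.ofReal (((k:ℝ)⁻¹)^2)
                            * (ENNReal.ofReal c * μ {ω | t < Rmaj ω} * ENNReal.ofReal (2*t)) := by
                          ring
                  · rw [if_neg hlt, zero_mul]
                    have hempty : {ω | t < T k ω} = ∅ := by
                      ext ω
                      simp only [Set.mem_setOf_eq, Set.mem_empty_iff_false, iff_false, not_lt]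
                      exact le_trans (hTle k ω) (not_lt.1 hlt)
                    rw [hempty]
                    simp
              _ = (∑ k ∈ Finset.Icc (1:ℕ) n, if t < (k:ℝ) then ENNReal.ofReal (((k:ℝ)⁻¹)^2) else 0)
                    * (ENNReal.ofReal c * μ {ω | t < Rmaj ω} * ENNReal.ofReal (2*t)) := by
                  rw [Finset.sum_mul]
              _ ≤ ENNReal.ofReal (2/t)
                    * (ENNReal.ofReal c * μ {ω | t < Rmaj ω} * ENNReal.ofReal (2*t)) := by
                  apply mul_le_mul_left
                  have h1 : (∑ k ∈ Finset.Icc (1:ℕ) n,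
                        if t < (k:ℝ) then ENNReal.ofReal (((k:ℝ)⁻¹)^2) else 0)
                      = ENNReal.ofReal (∑ k ∈ (Finset.Icc (1:ℕ) n).filter
                          (fun k : ℕ => t < (k:ℝ)), ((k:ℝ)⁻¹)^2) := by
                    rw [ENNReal.ofReal_sum_of_nonneg (fun i _ => by positivity),
                      Finset.sum_filter]
                  rw [h1]
                  exact ENNReal.ofReal_le_ofReal (urnAux_invsq_tail ht0 n)
              _ = ENNReal.ofReal (4*c) * μ {ω | t < Rmaj ω} := by
                  have h4 : ENNReal.ofReal (2/t) * ENNReal.ofReal (2*t) = ENNReal.ofReal 4 := by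
                    rw [← ENNReal.ofReal_mul (by positivity)]
                    congr 1
                    field_simp
                    ring
                  calc ENNReal.ofReal (2/t)
                        * (ENNReal.ofReal c * μ {ω | t < Rmaj ω} * ENNReal.ofReal (2*t))
                      = (ENNReal.ofReal (2/t) * ENNReal.ofReal (2*t))
                          * (ENNReal.ofReal c * μ {ω | t < Rmaj ω}) := by ring
                    _ = ENNReal.ofReal 4 * (ENNReal.ofReal c * μ {ω | t < Rmaj ω}) := by rw [h4]
                    _ = ENNReal.ofReal (4*c) * μ {ω | t < Rmaj ω} := by
                        rw [← mul_assoc, ← ENNReal.ofReal_mul (by norm_num)]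
        _ = ENNReal.ofReal (4*c) * ∫⁻ t in Set.Ioi (0:ℝ), μ {ω | t < Rmaj ω} :=
            lintegral_const_mul _ hRtail_meas
        _ = ENNReal.ofReal (4*c) * ∫⁻ ω, ENNReal.ofReal (Rmaj ω) ∂μ := by
            rw [← lintegral_eq_lintegral_meas_lt μ
              (Filter.Eventually.of_forall fun ω => (hRpos ω).le) hRmeasb.aemeasurable]
    · -- Assumption 2(b)
      set x₂ : ℝ := max 1 (max xp (max xm xr)) with hx₂def
      have hx₂1 : (1:ℝ) ≤ x₂ := le_max_left _ _
      have hx₂p : xp ≤ x₂ := le_trans (le_max_left _ _) (le_max_right _ _)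
      have hx₂m : xm ≤ x₂ :=
        le_trans (le_trans (le_max_left _ _) (le_max_right _ _)) (le_max_right _ _)
      have hx₂r : xr ≤ x₂ :=
        le_trans (le_trans (le_max_right _ _) (le_max_right _ _)) (le_max_right _ _)
      set ψ : ℝ → ℝ := fun x => φ (max x x₂) with hψdef
      have hψmono : Monotone ψ := fun a b hab =>
        hxm _ _ (le_trans hx₂m (le_max_right _ _)) (max_le_max hab le_rfl)
      have hψmeas : Measurable ψ := hψmono.measurable
      have hψnn : ∀ x, 0 ≤ ψ x := fun x =>
        hφ0 _ (le_trans (by linarith) (le_max_right _ _))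
      have hψeq : ∀ x, x₂ ≤ x → ψ x = φ x := by
        intro x hx
        simp only [hψdef]
        rw [max_eq_left hx]
      set M' : ℝ≥0∞ := Mb + ENNReal.ofReal (x₂ * φ x₂) with hM'def
      have hM'top : M' ≠ ⊤ := ENNReal.add_ne_top.2 ⟨hMbtop.ne, ENNReal.ofReal_ne_top⟩
      have hLψmeas : ∀ k, Measurable fun ω => ENNReal.ofReal (L k ω * ψ (L k ω)) :=
        fun k => ((hLmeas k).mul (hψmeas.comp (hLmeas k))).ennreal_ofReal
      have hM' : ∀ k, 1 ≤ k → ∫⁻ ω, ENNReal.ofReal (L k ω * ψ (L k ω)) ∂μ ≤ M' := by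
        intro k hk
        have hpt : ∀ ω, ENNReal.ofReal (L k ω * ψ (L k ω))
            ≤ ENNReal.ofReal (L k ω * φ (L k ω)) + ENNReal.ofReal (x₂ * φ x₂) := by
          intro ω
          rcases le_or_gt x₂ (L k ω) with h | h
          · rw [hψeq _ h]
            exact le_self_add
          · have h2 : L k ω * ψ (L k ω) ≤ x₂ * φ x₂ := by
              have hψL : ψ (L k ω) = φ x₂ := by
                simp only [hψdef]
                rw [max_eq_right h.le]
              rw [hψL]
              exact mul_le_mul_of_nonneg_right h.le (hφ0 _ (by linarith))
            exact le_trans (ENNReal.ofReal_le_ofReal h2) le_add_self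
        calc ∫⁻ ω, ENNReal.ofReal (L k ω * ψ (L k ω)) ∂μ
            ≤ ∫⁻ ω, (ENNReal.ofReal (L k ω * φ (L k ω)) + ENNReal.ofReal (x₂ * φ x₂)) ∂μ :=
              lintegral_mono hpt
          _ = (∫⁻ ω, ENNReal.ofReal (L k ω * φ (L k ω)) ∂μ) + ENNReal.ofReal (x₂ * φ x₂) := by
              rw [lintegral_add_right _ measurable_const, lintegral_const, measure_univ, mul_one]
          _ ≤ M' := by
              rw [hM'def]
              exact add_le_add_left (hMbd k hk) _
      set k₂ : ℕ := max ⌈x₂⌉₊ 1 with hk₂def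
      have hk₂x : ∀ k : ℕ, k₂ ≤ k → x₂ ≤ (k:ℝ) := by
        intro k hk
        have h1 : ⌈x₂⌉₊ ≤ k := le_trans (le_max_left _ _) hk
        exact le_trans (Nat.le_ceil x₂) (by exact_mod_cast h1)
      have hk₂1 : ∀ k : ℕ, k₂ ≤ k → 1 ≤ k := fun k hk => le_trans (le_max_right _ _) hk
      have hμk : ∀ k : ℕ, k₂ ≤ k →
          μ {ω | (k:ℝ) < L k ω} ≤ M' * ENNReal.ofReal (1/((k:ℝ) * φ (k:ℝ))) := by
        intro k hk
        have hx₂k := hk₂x k hk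
        have hk1 : (1:ℝ) ≤ (k:ℝ) := le_trans hx₂1 hx₂k
        have hφk : 0 < φ (k:ℝ) := hxp _ (le_trans hx₂p hx₂k)
        have hsubset : {ω | (k:ℝ) < L k ω} ⊆
            {ω | ENNReal.ofReal ((k:ℝ) * φ (k:ℝ))
              ≤ ENNReal.ofReal (L k ω * ψ (L k ω))} := by
          intro ω hω
          simp only [Set.mem_setOf_eq] at hω ⊢
          apply ENNReal.ofReal_le_ofReal
          have h1 : (k:ℝ) * φ (k:ℝ) = (k:ℝ) * ψ (k:ℝ) := by rw [hψeq _ hx₂k]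
          rw [h1]
          calc (k:ℝ) * ψ (k:ℝ) ≤ (k:ℝ) * ψ (L k ω) :=
                mul_le_mul_of_nonneg_left (hψmono hω.le) (by linarith)
            _ ≤ L k ω * ψ (L k ω) := mul_le_mul_of_nonneg_right hω.le (hψnn _)
        have hε0 : ENNReal.ofReal ((k:ℝ) * φ (k:ℝ)) ≠ 0 :=
          (ENNReal.ofReal_pos.2 (by positivity)).ne'
        calc μ {ω | (k:ℝ) < L k ω}
            ≤ μ {ω | ENNReal.ofReal ((k:ℝ) * φ (k:ℝ))
                ≤ ENNReal.ofReal (L k ω * ψ (L k ω))} := measure_mono hsubset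
          _ ≤ (∫⁻ ω, ENNReal.ofReal (L k ω * ψ (L k ω)) ∂μ)
                / ENNReal.ofReal ((k:ℝ) * φ (k:ℝ)) :=
              meas_ge_le_lintegral_div (hLψmeas k).aemeasurable hε0 ENNReal.ofReal_ne_top
          _ ≤ M' / ENNReal.ofReal ((k:ℝ) * φ (k:ℝ)) :=
              ENNReal.div_le_div_right (hM' k (hk₂1 k hk)) _
          _ = M' * ENNReal.ofReal (1/((k:ℝ) * φ (k:ℝ))) := by
              rw [div_eq_mul_inv, one_div, ENNReal.ofReal_inv_of_pos (by positivity)]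
      have hsum_nn : ∀ k : ℕ, 0 ≤ 1/((k:ℝ) * φ (k:ℝ)) := by
        intro k
        apply div_nonneg zero_le_one
        exact mul_nonneg (Nat.cast_nonneg k) (hφ0 _ (Nat.cast_nonneg k))
      have htsumφ : (∑' k : ℕ, ENNReal.ofReal (1/((k:ℝ) * φ (k:ℝ)))) ≠ ⊤ := by
        rw [← ENNReal.ofReal_tsum_of_nonneg hsum_nn hsum]
        exact ENNReal.ofReal_ne_top
      have hIf : (∑' k:ℕ, if k < k₂ then (1:ℝ≥0∞) else 0) ≠ ⊤ := by
        have heq : (∑' k:ℕ, if k < k₂ then (1:ℝ≥0∞) else 0)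
            = ∑ k ∈ Finset.range k₂, (if k < k₂ then (1:ℝ≥0∞) else 0) :=
          tsum_eq_sum (fun k hk => if_neg (by simpa using hk))
        rw [heq]
        exact (ENNReal.sum_lt_top.2 fun k _ => by split <;> simp).ne
      have hBCb : (∑' k:ℕ, μ {ω | (k:ℝ) < L k ω}) ≠ ⊤ := by
        have hterm : ∀ k:ℕ, μ {ω | (k:ℝ) < L k ω}
            ≤ (if k < k₂ then (1:ℝ≥0∞) else 0)
              + M' * ENNReal.ofReal (1/((k:ℝ) * φ (k:ℝ))) := by
          intro k
          by_cases hk : k < k₂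
          · rw [if_pos hk]
            exact le_trans prob_le_one le_self_add
          · rw [if_neg hk, zero_add]
            exact hμk k (not_lt.1 hk)
        refine ne_top_of_le_ne_top ?_ (ENNReal.tsum_le_tsum hterm)
        rw [ENNReal.tsum_add, ENNReal.tsum_mul_left]
        exact ENNReal.add_ne_top.2 ⟨hIf, ENNReal.mul_ne_top hM'top htsumφ⟩
      have hsq : Summable (fun k : ℕ => ((k:ℝ)⁻¹)^2) := by
        have h2 := (Real.summable_nat_pow_inv (p := 2)).2 (by norm_num)
        simpa [inv_pow] using h2
      have htsum_sq : (∑' k : ℕ, ENNReal.ofReal (((k:ℝ)⁻¹)^2)) ≠ ⊤ := by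
        rw [← ENNReal.ofReal_tsum_of_nonneg (fun k => by positivity) hsq]
        exact ENNReal.ofReal_ne_top
      have hbe : ∀ k : ℕ, 1 ≤ k → ENNReal.ofReal (((k:ℝ)⁻¹)^2) * β k
          ≤ (if k < k₂ then (1:ℝ≥0∞) else 0)
            + (ENNReal.ofReal (x₂^2) * ENNReal.ofReal (((k:ℝ)⁻¹)^2)
               + M' * ENNReal.ofReal (1/((k:ℝ) * φ (k:ℝ)))) := by
        intro k hk1
        have hk0 : (1:ℝ) ≤ (k:ℝ) := by exact_mod_cast hk1
        by_cases hk : k < k₂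
        · rw [if_pos hk]
          refine le_trans ?_ le_self_add
          calc ENNReal.ofReal (((k:ℝ)⁻¹)^2) * β k
              ≤ ENNReal.ofReal (((k:ℝ)⁻¹)^2) * ENNReal.ofReal ((k:ℝ)^2) :=
                mul_le_mul_right (hβfin k hk1) _
            _ = ENNReal.ofReal (((k:ℝ)⁻¹)^2 * (k:ℝ)^2) :=
                (ENNReal.ofReal_mul (by positivity)).symm
            _ ≤ 1 := by
                rw [show ((k:ℝ)⁻¹)^2 * (k:ℝ)^2 = 1 from by
                  have : (k:ℝ) ≠ 0 := by linarith
                  field_simp]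
                simp
        · rw [if_neg hk, zero_add]
          have hx₂k := hk₂x k (not_lt.1 hk)
          have hφk : 0 < φ (k:ℝ) := hxp _ (le_trans hx₂p hx₂k)
          have hpt : ∀ ω, ENNReal.ofReal ((T k ω)^2)
              ≤ ENNReal.ofReal (x₂^2)
                + ENNReal.ofReal ((k:ℝ)/φ (k:ℝ)) * ENNReal.ofReal (L k ω * ψ (L k ω)) := by
            intro ω
            have hLψnn : 0 ≤ L k ω * ψ (L k ω) := mul_nonneg (hLnn k ω) (hψnn _)
            have hkφnn : (0:ℝ) ≤ (k:ℝ)/φ (k:ℝ) := by positivity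
            rw [← ENNReal.ofReal_mul hkφnn,
              ← ENNReal.ofReal_add (by positivity) (mul_nonneg hkφnn hLψnn)]
            apply ENNReal.ofReal_le_ofReal
            have hTval : T k ω = if L k ω ≤ (k:ℝ) then L k ω else 0 := rfl
            by_cases hL : L k ω ≤ (k:ℝ)
            · rw [hTval, if_pos hL]
              rcases le_or_gt (L k ω) x₂ with h2 | h2
              · have h3 : (L k ω)^2 ≤ x₂^2 := by nlinarith [hLnn k ω]
                nlinarith [mul_nonneg hkφnn hLψnn]
              · have hψL : ψ (L k ω) = φ (L k ω) := hψeq _ h2.le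
                have hφL : 0 < φ (L k ω) := hxp _ (by linarith)
                have hratio : L k ω / φ (L k ω) ≤ (k:ℝ) / φ (k:ℝ) :=
                  hxr _ _ (by linarith) hL
                have hLsq : (L k ω)^2 = (L k ω / φ (L k ω)) * (L k ω * φ (L k ω)) := by
                  field_simp
                have h3 : (L k ω / φ (L k ω)) * (L k ω * φ (L k ω))
                    ≤ ((k:ℝ)/φ (k:ℝ)) * (L k ω * φ (L k ω)) :=
                  mul_le_mul_of_nonneg_right hratio (mul_nonneg (hLnn k ω) hφL.le)
                rw [hψL, hLsq]
                nlinarith [sq_nonneg x₂]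
            · rw [hTval, if_neg hL]
              have h4 := mul_nonneg hkφnn hLψnn
              nlinarith [sq_nonneg x₂]
          have hβk : β k ≤ ENNReal.ofReal (x₂^2) + ENNReal.ofReal ((k:ℝ)/φ (k:ℝ)) * M' := by
            calc β k
                ≤ ∫⁻ ω, (ENNReal.ofReal (x₂^2)
                    + ENNReal.ofReal ((k:ℝ)/φ (k:ℝ))
                      * ENNReal.ofReal (L k ω * ψ (L k ω))) ∂μ := lintegral_mono hpt
              _ = ENNReal.ofReal (x₂^2)
                  + ENNReal.ofReal ((k:ℝ)/φ (k:ℝ))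
                    * ∫⁻ ω, ENNReal.ofReal (L k ω * ψ (L k ω)) ∂μ := by
                  rw [lintegral_add_left measurable_const,
                    lintegral_const_mul _ (hLψmeas k), lintegral_const, measure_univ, mul_one]
              _ ≤ _ := add_le_add_right (mul_le_mul_right (hM' k hk1) _) _
          calc ENNReal.ofReal (((k:ℝ)⁻¹)^2) * β k
              ≤ ENNReal.ofReal (((k:ℝ)⁻¹)^2)
                  * (ENNReal.ofReal (x₂^2) + ENNReal.ofReal ((k:ℝ)/φ (k:ℝ)) * M') :=
                mul_le_mul_right hβk _
            _ = ENNReal.ofReal (x₂^2) * ENNReal.ofReal (((k:ℝ)⁻¹)^2)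
                + (ENNReal.ofReal (((k:ℝ)⁻¹)^2) * ENNReal.ofReal ((k:ℝ)/φ (k:ℝ))) * M' := by
                ring
            _ = ENNReal.ofReal (x₂^2) * ENNReal.ofReal (((k:ℝ)⁻¹)^2)
                + M' * ENNReal.ofReal (1/((k:ℝ) * φ (k:ℝ))) := by
                have hkne : (k:ℝ) ≠ 0 := by linarith
                have hmm : ENNReal.ofReal (((k:ℝ)⁻¹)^2) * ENNReal.ofReal ((k:ℝ)/φ (k:ℝ))
                    = ENNReal.ofReal (1/((k:ℝ) * φ (k:ℝ))) := by
                  rw [← ENNReal.ofReal_mul (by positivity)]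
                  congr 1
                  field_simp
                rw [hmm]
                ring
      refine ⟨∑' k : ℕ, ((if k < k₂ then (1:ℝ≥0∞) else 0)
          + (ENNReal.ofReal (x₂^2) * ENNReal.ofReal (((k:ℝ)⁻¹)^2)
             + M' * ENNReal.ofReal (1/((k:ℝ) * φ (k:ℝ))))), ?_, ?_, hBCgen hBCb⟩
      · rw [ENNReal.tsum_add, ENNReal.tsum_add, ENNReal.tsum_mul_left, ENNReal.tsum_mul_left]
        exact ENNReal.add_ne_top.2 ⟨hIf, ENNReal.add_ne_top.2
          ⟨ENNReal.mul_ne_top ENNReal.ofReal_ne_top htsum_sq,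
           ENNReal.mul_ne_top hM'top htsumφ⟩⟩
      · intro n
        refine le_trans (Finset.sum_le_sum fun k hk => hbe k (Finset.mem_Icc.1 hk).1) ?_
        exact ENNReal.sum_le_tsum _
  -- real-variable variance bound
  have hY2le : ∀ k, 1 ≤ k → ∫ ω, Y k ω * Y k ω ∂μ ≤ c'^2 * (β k).toReal := by
    intro k hk
    have hTb : ∀ ω, Y k ω * Y k ω ≤ c'^2 * (T k ω)^2 := by
      intro ω
      have h1 := hYabs k hk ω
      have h2 := hTnn k ω
      nlinarith [abs_nonneg (Y k ω), abs_mul_abs_self (Y k ω)]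
    have hint2 : Integrable (fun ω => c'^2 * (T k ω)^2) μ := by
      refine urnAux_int_of_bdd (C := c'^2 * (k:ℝ)^2)
        (((hTmeas k).pow_const 2).const_mul (c'^2)).aestronglyMeasurable ?_
      filter_upwards with ω
      have h1 := hTle k ω
      have h2 := hTnn k ω
      rw [abs_of_nonneg (by positivity)]
      have h3 : T k ω^2 ≤ (k:ℝ)^2 := by nlinarith [mul_self_le_mul_self h2 h1]
      exact mul_le_mul_of_nonneg_left h3 (by positivity)
    have hle := integral_mono (hY2int k hk) hint2 hTb
    have heq : ∫ ω, c'^2*(T k ω)^2 ∂μ = c'^2 * (β k).toReal := by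
      rw [integral_const_mul]
      congr 1
      rw [integral_eq_lintegral_of_nonneg_ae
        (Filter.Eventually.of_forall fun ω => sq_nonneg _)
        ((hTmeas k).pow_const 2).aestronglyMeasurable]
    exact le_trans hle heq.le
  set B : ℝ := c'^2 * A.toReal with hBdef
  have hMsqB : ∀ n, ∫ ω, Mf n ω * Mf n ω ∂μ ≤ B := by
    intro n
    have hne : ∀ k ∈ Finset.Icc (1:ℕ) n,
        ENNReal.ofReal (((k:ℝ)⁻¹)^2) * β k ≠ ⊤ := by
      intro k hk
      exact ENNReal.mul_ne_top ENNReal.ofReal_ne_top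
        ((hβfin k (Finset.mem_Icc.1 hk).1).trans_lt ENNReal.ofReal_lt_top).ne
    calc ∫ ω, Mf n ω * Mf n ω ∂μ
        = ∑ k ∈ Finset.Icc (1:ℕ) n, ((k:ℝ)⁻¹)^2 * ∫ ω, D k ω * D k ω ∂μ := hMsq n
      _ ≤ ∑ k ∈ Finset.Icc (1:ℕ) n, ((k:ℝ)⁻¹)^2 * (c'^2 * (β k).toReal) := by
          apply Finset.sum_le_sum
          intro k hk
          have hk1 := (Finset.mem_Icc.1 hk).1
          exact mul_le_mul_of_nonneg_left
            (le_trans (hD2le k hk1) (hY2le k hk1)) (by positivity)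
      _ = c'^2 * ∑ k ∈ Finset.Icc (1:ℕ) n, (ENNReal.ofReal (((k:ℝ)⁻¹)^2) * β k).toReal := by
          rw [Finset.mul_sum]
          refine Finset.sum_congr rfl fun k hk => ?_
          rw [ENNReal.toReal_mul, ENNReal.toReal_ofReal (by positivity)]
          ring
      _ = c'^2 * (∑ k ∈ Finset.Icc (1:ℕ) n, ENNReal.ofReal (((k:ℝ)⁻¹)^2) * β k).toReal := by
          rw [ENNReal.toReal_sum hne]
      _ ≤ c'^2 * A.toReal := by
          have := ENNReal.toReal_mono hAne (hAle n)
          nlinarith [sq_nonneg c']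
      _ = B := rfl
  have hL1 : ∀ n, eLpNorm (Mf n) 1 μ ≤ ((1 + B)/2).toNNReal := by
    intro n
    have hMb := hMbdd n
    have hM2 : Integrable (fun ω => Mf n ω * Mf n ω) μ := by
      refine hint_mul _ _ _ _ ((hMsmF n).mono (F.le n)).aestronglyMeasurable
        ((hMsmF n).mono (F.le n)).aestronglyMeasurable ?_ hMb hMb
      exact Finset.sum_nonneg fun k _ => by positivity
    have habs : Integrable (fun ω => |Mf n ω|) μ := (hMint n).abs
    have hIconst : Integrable (fun _ : Ω => (1:ℝ)) μ := integrable_const 1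
    have hptw : ∀ ω, |Mf n ω| ≤ (1 + Mf n ω * Mf n ω)/2 := by
      intro ω
      nlinarith [sq_nonneg (|Mf n ω| - 1), abs_mul_abs_self (Mf n ω)]
    have h1 : ∫ ω, |Mf n ω| ∂μ ≤ (1 + ∫ ω, Mf n ω * Mf n ω ∂μ)/2 := by
      calc ∫ ω, |Mf n ω| ∂μ ≤ ∫ ω, (1 + Mf n ω * Mf n ω)/2 ∂μ :=
            integral_mono habs ((hIconst.add hM2).div_const 2) hptw
        _ = (1 + ∫ ω, Mf n ω * Mf n ω ∂μ)/2 := by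
            rw [integral_div, integral_add hIconst hM2, integral_const]
            simp
    have h2 : ∫ ω, |Mf n ω| ∂μ ≤ (1+B)/2 := by
      have := hMsqB n
      linarith
    have heq : eLpNorm (Mf n) 1 μ = ENNReal.ofReal (∫ ω, ‖Mf n ω‖ ∂μ) := by
      rw [eLpNorm_one_eq_lintegral_enorm, ← ofReal_integral_norm_eq_lintegral_enorm (hMint n)]
    rw [heq]
    show ENNReal.ofReal _ ≤ ENNReal.ofReal ((1+B)/2)
    apply ENNReal.ofReal_le_ofReal
    simpa [Real.norm_eq_abs] using h2
  -- almost sure convergence of the martingale, Kronecker, and conclusion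
  have hconv := hmart.submartingale.ae_tendsto_limitProcess hL1
  filter_upwards [hconv, hBC] with ω hω hev
  have hkron : Tendsto (fun n : ℕ => (n:ℝ)⁻¹ * ∑ k ∈ Finset.Icc (1:ℕ) n, D k ω)
      atTop (𝓝 0) := urnAux_kronecker hω
  have hXY : Tendsto (fun n : ℕ => (n:ℝ)⁻¹ * ∑ k ∈ Finset.Icc (1:ℕ) n, (X k ω - Y k ω))
      atTop (𝓝 0) := by
    apply urnAux_cesaro_zero
    filter_upwards [hev] with k hk
    have : Y k ω = X k ω := by
      simp only [hYdef]
      rw [if_pos hk, mul_one]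
    rw [this, sub_self]
  have hfinal := hXY.add hkron
  rw [add_zero] at hfinal
  apply hfinal.congr
  intro n
  rw [← mul_add, ← Finset.sum_add_distrib]
  congr 1
  apply Finset.sum_congr rfl
  intro k _
  show (X k ω - Y k ω) + D k ω = X k ω - Z k ω
  have : D k ω = Y k ω - Z k ω := rfl
  rw [this]
  ring

end
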